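/- arXiv:2403.13770 — 2 statements merged into one kernel-verified Lean document; each statement's English description precedes it below -/
import Mathlib

section
/- Error reduction lemma: Let $H$ be a Hilbert space with norm $\|\cdot\|_B$, and suppose $\|u - w\|_B^2 = \|u - u_{\tilde{W}}\|_B^2 + \|u_{\tilde{W}} - w\|_B^2$ for all $w \in \tilde{W}$ (Galerkin orthogonality). Assume (i) $\|u - u_{\tilde{W}}\|_B \leq \sqrt{1 - \beta}\, \|u - w\|_B$ for some $\beta \in (0,1)$ and a given $w$, and (ii) $\|u_{\tilde{W}} - \tilde{w}\|_B \leq \gamma\, R$ where $R \leq K \|u - w\|_B$ for constants $\gamma, K > 0$ with $\tilde{w} \in \tilde{W}$. Then $\|u - \tilde{w}\|_B \leq \sqrt{1 - \beta + \gamma^2 K^2}\, \|u - w\|_B$. -/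
/-- Error reduction lemma: with Galerkin orthogonality (via the orthogonal projection
`u_W̃` in the `B`-inner product, which is the inner product of `H`), if
`‖u - u_W̃‖ ≤ √(1-β) ‖u - w‖` and `‖u_W̃ - w̃‖ ≤ γ R` with `R ≤ K ‖u - w‖`, then
`‖u - w̃‖ ≤ √(1 - β + γ²K²) ‖u - w‖`. -/
theorem stmt_9 {H : Type*} [NormedAddCommGroup H] [InnerProductSpace ℝ H]
    (Wt : Submodule ℝ H) [CompleteSpace Wt]
    (u w : H) (wt : H) (hwt : wt ∈ Wt)
    (β γ K R : ℝ) (hβ : β ∈ Set.Ioo (0 : ℝ) 1) (hγ : 0 < γ) (hK : 0 < K) (hR : 0 ≤ R)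
    (h1 : ‖u - (Wt.orthogonalProjectionOnto u : H)‖ ≤ Real.sqrt (1 - β) * ‖u - w‖)
    (h2 : ‖(Wt.orthogonalProjectionOnto u : H) - wt‖ ≤ γ * R)
    (h3 : R ≤ K * ‖u - w‖) :
    ‖u - wt‖ ≤ Real.sqrt (1 - β + γ ^ 2 * K ^ 2) * ‖u - w‖ := by
  set p : H := (Wt.orthogonalProjectionOnto u : H) with hp
  have horth : (inner ℝ (u - p) (p - wt) : ℝ) = 0 := by
    have h : u - (Wt.orthogonalProjectionOnto u : H) ∈ Wtᗮ := Submodule.sub_starProjection_mem_orthogonal u (K := Wt)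
    rw [← hp] at h; rw [real_inner_comm]; exact h (p - wt) (Wt.sub_mem (Wt.orthogonalProjectionOnto u).2 hwt)
  have hpyth : ‖u - wt‖ ^ 2 = ‖u - p‖ ^ 2 + ‖p - wt‖ ^ 2 := by
    have : u - wt = (u - p) + (p - wt) := by abel
    rw [this, norm_add_sq_real, horth]; ring
  have hγR : ‖p - wt‖ ≤ γ * (K * ‖u - w‖) := by
    calc ‖p - wt‖ ≤ γ * R := h2
    _ ≤ γ * (K * ‖u - w‖) := by nlinarith
  have h1' : ‖u - p‖ ^ 2 ≤ (1 - β) * ‖u - w‖ ^ 2 := by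
    have hs : Real.sqrt (1 - β) ^ 2 = 1 - β := Real.sq_sqrt (by linarith [hβ.2])
    nlinarith [norm_nonneg (u - p), norm_nonneg (u - w),
      mul_nonneg (Real.sqrt_nonneg (1 - β)) (norm_nonneg (u - w))]
  have h2' : ‖p - wt‖ ^ 2 ≤ γ ^ 2 * K ^ 2 * ‖u - w‖ ^ 2 := by
    nlinarith [norm_nonneg (p - wt), norm_nonneg (u - w)]
  have hsq : ‖u - wt‖ ^ 2 ≤ (1 - β + γ ^ 2 * K ^ 2) * ‖u - w‖ ^ 2 := by
    rw [hpyth]; nlinarith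
  have hc : 0 ≤ 1 - β + γ ^ 2 * K ^ 2 := by nlinarith [hβ.2]
  calc ‖u - wt‖ = Real.sqrt (‖u - wt‖ ^ 2) := by
        rw [Real.sqrt_sq (norm_nonneg _)]
    _ ≤ Real.sqrt ((1 - β + γ ^ 2 * K ^ 2) * ‖u - w‖ ^ 2) := Real.sqrt_le_sqrt hsq
    _ = Real.sqrt (1 - β + γ ^ 2 * K ^ 2) * ‖u - w‖ := by
        rw [Real.sqrt_mul hc, Real.sqrt_sq (norm_nonneg _)]
end

section
/- Lower bound for restricted residual via frame and approximation: let $(\psi_\lambda)_{\lambda \in \Theta}$ be a frame of a Hilbert space $V$ with lower frame bound $c_\Psi$, let $\xi \in V'$, and let $\mathbf{r} = (\langle \xi, \psi_\lambda\rangle)_{\lambda \in \Theta}$. If $\hat{\mathbf{r}} \in \ell_2(\Theta)$ satisfies $\|\mathbf{r} - \hat{\mathbf{r}}\| \leq \zeta \|\mathbf{r}\|$ with $\zeta \in (0,1)$ and $\Lambda \subset \Theta$ satisfies $\|\hat{\mathbf{r}}|_\Lambda\| \geq \omega_0 \|\hat{\mathbf{r}}\|$ with $(1+\omega_0)\zeta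 < \omega_0 \leq 1$, then $\|\mathbf{r}|_\Lambda\| \geq (\omega_0 - (1+\omega_0)\zeta)\, c_\Psi\, \|\xi\|_{V'}$. -/
open scoped ENNReal

private lemma memℓp_two' {ι : Type*} (f : ι → ℝ) (hf : Summable fun i => f i ^ 2) :
    Memℓp f 2 := by
  apply memℓp_gen
  have : ((2 : ℝ≥0∞).toReal) = (2:ℝ) := by norm_num
  rw [this]
  simpa [Real.rpow_natCast, sq_abs] using hf

private lemma sqrt_tsum_eq_norm' {ι : Type*} (f : ι → ℝ) (hf : Summable fun i => f i ^ 2) :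
    Real.sqrt (∑' i, f i ^ 2) = ‖(⟨f, memℓp_two' f hf⟩ : lp (fun _ : ι => ℝ) 2)‖ := by
  have h2 : (0:ℝ) < (2 : ℝ≥0∞).toReal := by norm_num
  have := lp.norm_rpow_eq_tsum h2 (⟨f, memℓp_two' f hf⟩ : lp (fun _ : ι => ℝ) 2)
  have h2' : ((2 : ℝ≥0∞).toReal) = (2:ℝ) := by norm_num
  rw [h2', show (2:ℝ) = ((2:ℕ):ℝ) by norm_num] at this
  simp only [Real.rpow_natCast] at this
  have hv : ∑' i, f i ^ 2 = ‖(⟨f, memℓp_two' f hf⟩ : lp (fun _ : ι => ℝ) 2)‖ ^ 2 := by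
    rw [this]
    simp [sq_abs]
  rw [hv, Real.sqrt_sq (norm_nonneg _)]

private lemma sqrt_tsum_sq_add_le' {ι : Type*} (f g : ι → ℝ)
    (hf : Summable fun i => f i ^ 2) (hg : Summable fun i => g i ^ 2) :
    Real.sqrt (∑' i, (f i + g i) ^ 2) ≤
      Real.sqrt (∑' i, f i ^ 2) + Real.sqrt (∑' i, g i ^ 2) := by
  have hfg : Summable fun i => (f i + g i) ^ 2 := by
    apply Summable.of_nonneg_of_le (fun i => sq_nonneg _)
      (fun i => ?_) (((hf.mul_left 2).add (hg.mul_left 2)))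
    nlinarith [sq_nonneg (f i - g i)]
  rw [sqrt_tsum_eq_norm' f hf, sqrt_tsum_eq_norm' g hg, sqrt_tsum_eq_norm' _ hfg]
  have hsum : (⟨fun i => f i + g i, memℓp_two' _ hfg⟩ : lp (fun _ : ι => ℝ) 2)
      = (⟨f, memℓp_two' f hf⟩ : lp (fun _ : ι => ℝ) 2) + ⟨g, memℓp_two' g hg⟩ := by
    ext i
    simp [lp.coeFn_add]
    rfl
  rw [hsum]
  exact norm_add_le _ _

/-- Lower bound for the restricted residual via the frame and the approximation:
with `r = (⟨ξ,ψ_λ⟩)_λ`, if `‖r - r̂‖ ≤ ζ‖r‖` and `‖r̂|_Λ‖ ≥ ω₀‖r̂‖` with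
`(1+ω₀)ζ < ω₀ ≤ 1`, then `‖r|_Λ‖ ≥ (ω₀ - (1+ω₀)ζ) c_Ψ ‖ξ‖_{V'}`. -/
theorem stmt_12 {V : Type*} [NormedAddCommGroup V] [InnerProductSpace ℝ V] [CompleteSpace V]
    {Θ : Type*} [Countable Θ] (ψ : Θ → V)
    (cΨ CΨ : ℝ) (hc : 0 < cΨ) (hC : 0 < CΨ)
    (hframe : ∀ ξ : V →L[ℝ] ℝ,
      cΨ ^ 2 * ‖ξ‖ ^ 2 ≤ ∑' lam : Θ, (ξ (ψ lam)) ^ 2 ∧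
      ∑' lam : Θ, (ξ (ψ lam)) ^ 2 ≤ CΨ ^ 2 * ‖ξ‖ ^ 2)
    (ξ : V →L[ℝ] ℝ) (rh : Θ → ℝ) (hrh : Summable fun lam => rh lam ^ 2)
    (ζ ω0 : ℝ) (hζ : ζ ∈ Set.Ioo (0 : ℝ) 1) (hω : ω0 ∈ Set.Ioc (0 : ℝ) 1)
    (hcomp : (1 + ω0) * ζ < ω0)
    (happrox : Real.sqrt (∑' lam : Θ, (ξ (ψ lam) - rh lam) ^ 2) ≤
      ζ * Real.sqrt (∑' lam : Θ, (ξ (ψ lam)) ^ 2))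
    (Λ : Set Θ)
    (hbulk : ω0 * Real.sqrt (∑' lam : Θ, rh lam ^ 2) ≤
      Real.sqrt (∑' lam : Λ, rh lam ^ 2)) :
    (ω0 - (1 + ω0) * ζ) * cΨ * ‖ξ‖ ≤ Real.sqrt (∑' lam : Λ, (ξ (ψ lam)) ^ 2) := by
  set r : Θ → ℝ := fun lam => ξ (ψ lam) with hr
  by_cases hsum : Summable fun lam => r lam ^ 2
  · -- abbreviations
    set R := Real.sqrt (∑' lam : Θ, r lam ^ 2) with hR
    set Rh := Real.sqrt (∑' lam : Θ, rh lam ^ 2) with hRh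
    have hd : Summable fun lam => (r lam - rh lam) ^ 2 := by
      apply Summable.of_nonneg_of_le (fun i => sq_nonneg _)
        (fun i => ?_) (((hsum.mul_left 2).add (hrh.mul_left 2)))
      nlinarith [sq_nonneg (r i + rh i)]
    have hR0 : 0 ≤ R := Real.sqrt_nonneg _
    have hRh0 : 0 ≤ Rh := Real.sqrt_nonneg _
    -- R ≤ Rh + D
    have h1 : R ≤ Rh + Real.sqrt (∑' lam : Θ, (r lam - rh lam) ^ 2) := by
      have := sqrt_tsum_sq_add_le' rh (fun lam => r lam - rh lam) hrh hd
      simpa using this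
    -- Rh ≥ (1-ζ) R
    have h2 : (1 - ζ) * R ≤ Rh := by
      nlinarith [happrox, hR0]
    -- restriction bounds
    have hsubD : Real.sqrt (∑' lam : Λ, (r lam - rh lam) ^ 2) ≤
        Real.sqrt (∑' lam : Θ, (r lam - rh lam) ^ 2) := by
      apply Real.sqrt_le_sqrt
      exact Summable.tsum_subtype_le _ Λ (fun a => sq_nonneg _) hd
    -- Minkowski on Λ : sqrt ∑_Λ rh² ≤ sqrt ∑_Λ r² + sqrt ∑_Λ (rh-r)²
    have h3 : Real.sqrt (∑' lam : Λ, rh lam ^ 2) ≤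
        Real.sqrt (∑' lam : Λ, r lam ^ 2) +
        Real.sqrt (∑' lam : Λ, (r lam - rh lam) ^ 2) := by
      have hs1 : Summable fun lam : Λ => r lam ^ 2 := hsum.subtype _
      have hs2 : Summable fun lam : Λ => (rh lam - r lam) ^ 2 :=
        (hd.subtype Λ).congr (fun i => by
          show (r i.1 - rh i.1) ^ 2 = (rh i.1 - r i.1) ^ 2; ring)
      have := sqrt_tsum_sq_add_le' (fun lam : Λ => r lam)
        (fun lam : Λ => rh lam - r lam) hs1 hs2
      have heq : ∀ lam : Λ, (rh lam - r lam) ^ 2 = (r lam - rh lam) ^ 2 := fun lam => by ring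
      simp only [heq] at this
      simpa using this
    have hDζ : Real.sqrt (∑' lam : Λ, (r lam - rh lam) ^ 2) ≤ ζ * R := by
      calc _ ≤ Real.sqrt (∑' lam : Θ, (r lam - rh lam) ^ 2) := hsubD
        _ ≤ ζ * R := happrox
    -- frame lower bound : cΨ ‖ξ‖ ≤ R
    have hframeL : cΨ * ‖ξ‖ ≤ R := by
      have := (hframe ξ).1
      have h := Real.sqrt_le_sqrt this
      rwa [show cΨ ^ 2 * ‖ξ‖ ^ 2 = (cΨ * ‖ξ‖) ^ 2 by ring,
        Real.sqrt_sq (by positivity)] at h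
    -- assemble
    have key : (ω0 - (1 + ω0) * ζ) * R ≤ Real.sqrt (∑' lam : Λ, r lam ^ 2) := by
      have := hbulk
      nlinarith [hω.1, hζ.1.le]
    have hcoef : 0 ≤ ω0 - (1 + ω0) * ζ := by linarith
    calc (ω0 - (1 + ω0) * ζ) * cΨ * ‖ξ‖
        = (ω0 - (1 + ω0) * ζ) * (cΨ * ‖ξ‖) := by ring
      _ ≤ (ω0 - (1 + ω0) * ζ) * R := by
          exact mul_le_mul_of_nonneg_left hframeL hcoef
      _ ≤ _ := key
  · have hz : (∑' lam : Θ, r lam ^ 2) = 0 := tsum_eq_zero_of_not_summable hsum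
    have := (hframe ξ).1
    rw [hz] at this
    have hξ : ‖ξ‖ = 0 := by
      by_contra h
      have h0 : 0 < ‖ξ‖ := lt_of_le_of_ne (norm_nonneg ξ) (Ne.symm h)
      have : (0:ℝ) < cΨ ^ 2 * ‖ξ‖ ^ 2 := by positivity
      linarith
    rw [hξ]
    simpa using Real.sqrt_nonneg _
end
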